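/- Let G be a weighted graph with nonnegative edge weight μ(e) on each edge e, with weighted adjacency matrix A(G) and spectral radius λ₁(G). Then λ₁(G) ≤ sqrt( 2 · Σ_{e ∈ E(G)} ((c_G(e) − 1)/c_G(e)) · μ(e)² ), where c_G(e) is the local clique number of the edge e computed in the support graph of G. -/

import Mathlib

/-- The spectral radius of a real matrix, defined as the supremum of its real
spectrum (the largest real eigenvalue; for symmetric or nonnegative matrices
this is the spectral radius). -/
noncomputable def lam1 {n : Type*} [Fintype n] [DecidableEq n] (A : Matrix n n ℝ) : ℝ :=
  sSup (spectrum ℝ A)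


/-- The support graph of a weighted graph with weight function `μ`: vertices are
adjacent when they are distinct and joined by an edge of nonzero weight. -/
def supportGraph {V : Type*} (μ : V → V → ℝ) : SimpleGraph V where
  Adj u v := u ≠ v ∧ (μ u v ≠ 0 ∨ μ v u ≠ 0)
  symm := ⟨fun u v h => ⟨h.1.symm, h.2.symm⟩⟩
  loopless := ⟨fun v h => h.1 rfl⟩

noncomputable instance {V : Type*} [DecidableEq V] (μ : V → V → ℝ) :
    DecidableRel (supportGraph μ).Adj :=
  fun u v => inferInstanceAs (Decidable (u ≠ v ∧ (μ u v ≠ 0 ∨ μ v u ≠ 0)))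

/-- `edgeCliqueNum G u v` is the maximum size of a clique of `G` containing both
`u` and `v`. -/
noncomputable def edgeCliqueNum {V : Type*} (G : SimpleGraph V) (u v : V) : ℕ :=
  sSup {k | ∃ s : Finset V, G.IsNClique k s ∧ u ∈ s ∧ v ∈ s}

lemma edgeCliqueNum_comm {V : Type*} (G : SimpleGraph V) (u v : V) :
    edgeCliqueNum G u v = edgeCliqueNum G v u := by
  unfold edgeCliqueNum
  congr 1
  ext k
  exact ⟨fun ⟨s, hs, h1, h2⟩ => ⟨s, hs, h2, h1⟩, fun ⟨s, hs, h1, h2⟩ => ⟨s, hs, h2, h1⟩⟩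

open Finset

set_option linter.unusedSectionVars false

section Helpers
variable {V : Type*} [Fintype V] [DecidableEq V] (G : SimpleGraph V) [DecidableRel G.Adj]

lemma wlst_bddAbove (u v : V) :
    BddAbove {k | ∃ s : Finset V, G.IsNClique k s ∧ u ∈ s ∧ v ∈ s} := by
  refine ⟨Fintype.card V, fun k hk => ?_⟩
  obtain ⟨s, hs, -, -⟩ := hk
  exact hs.card_eq ▸ s.card_le_univ

lemma wlst_clique_le {s : Finset V} (hs : G.IsClique ↑s) {u v : V}
    (hu : u ∈ s) (hv : v ∈ s) : s.card ≤ edgeCliqueNum G u v :=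
  le_csSup (wlst_bddAbove G u v) ⟨s, ⟨hs, rfl⟩, hu, hv⟩

lemma wlst_two_le {u v : V} (h : G.Adj u v) : 2 ≤ edgeCliqueNum G u v := by
  have hcard : ({u, v} : Finset V).card = 2 := card_pair h.ne
  have hcl : G.IsClique (↑({u, v} : Finset V)) := by
    rw [coe_pair]
    exact SimpleGraph.isClique_pair.2 fun _ => h
  exact hcard ▸ wlst_clique_le G hcl (mem_insert_self _ _) (mem_insert_of_mem (mem_singleton_self _))

/-- The Motzkin–Straus weight `c/(c-1)` on edges, `0` elsewhere. -/
noncomputable def wlstW (u v : V) : ℝ :=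
  if G.Adj u v then (edgeCliqueNum G u v : ℝ) / ((edgeCliqueNum G u v : ℝ) - 1) else 0

lemma wlstW_symm (u v : V) : wlstW G u v = wlstW G v u := by
  unfold wlstW
  rw [edgeCliqueNum_comm]
  by_cases h : G.Adj u v
  · rw [if_pos h, if_pos h.symm]
  · rw [if_neg h, if_neg fun hs => h hs.symm]

lemma wlstW_diag (u : V) : wlstW G u u = 0 := by
  simp [wlstW]

lemma wlstW_nonneg (u v : V) : 0 ≤ wlstW G u v := by
  unfold wlstW
  split_ifs with h
  · have h2 : (2 : ℝ) ≤ (edgeCliqueNum G u v : ℝ) := by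
      exact_mod_cast wlst_two_le G h
    exact div_nonneg (by linarith) (by linarith)
  · exact le_rfl

lemma wlstW_of_not_adj {u v : V} (h : ¬ G.Adj u v) : wlstW G u v = 0 := if_neg h

/-- helper: sum against the difference of two deltas -/
lemma wlst_sum_mul_d {u v : V} (huv : u ≠ v) (f : V → ℝ) :
    ∑ w, f w * (if w = u then (1:ℝ) else if w = v then -1 else 0) = f u - f v := by
  have key : ∀ w, f w * (if w = u then (1:ℝ) else if w = v then -1 else 0)
      = (if w = u then f w else 0) + (if w = v then -f w else 0) := by
    intro w
    by_cases h1 : w = u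
    · subst h1
      rw [if_pos rfl, if_pos rfl, if_neg huv]
      ring
    · by_cases h2 : w = v
      · subst h2
        rw [if_neg h1, if_pos rfl, if_neg h1, if_pos rfl]
        ring
      · rw [if_neg h1, if_neg h2, if_neg h1, if_neg h2]
        ring
  rw [Finset.sum_congr rfl fun w _ => key w, Finset.sum_add_distrib,
    Finset.sum_ite_eq' univ u f, Finset.sum_ite_eq' univ v (fun w => -f w),
    if_pos (mem_univ u), if_pos (mem_univ v)]
  ring

/-- The local Motzkin–Straus inequality (double-counted form). -/
lemma wlst_ms (n : ℕ) : ∀ y : V → ℝ, (∀ v, 0 ≤ y v) →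
    (univ.filter fun v => y v ≠ 0).card ≤ n →
    ∑ u, ∑ v, wlstW G u v * y u * y v ≤ (∑ v, y v) ^ 2 := by
  induction n with
  | zero =>
    intro y hy hcard
    have hzero : ∀ v : V, y v = 0 := by
      intro v
      by_contra hv
      have hmem : v ∈ univ.filter fun v => y v ≠ 0 := by simp [hv]
      have := Finset.card_pos.2 ⟨v, hmem⟩
      omega
    simp [hzero]
  | succ n IH =>
    intro y hy hcard
    by_cases hclique : ∀ u ∈ univ.filter (fun v => y v ≠ 0),
        ∀ v ∈ univ.filter (fun v => y v ≠ 0), u ≠ v → G.Adj u v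
    · -- support is a clique
      set supp := univ.filter fun v => y v ≠ 0 with hsupp
      set k := supp.card with hk
      have hyzero : ∀ u, u ∉ supp → y u = 0 := by
        intro u hu
        by_contra h
        exact hu (by simp [hsupp, h])
      have hrestr : ∑ u, ∑ v, wlstW G u v * y u * y v
          = ∑ u ∈ supp, ∑ v ∈ supp, wlstW G u v * y u * y v := by
        rw [← Finset.sum_subset (Finset.filter_subset _ univ)
          (fun u _ hu => Finset.sum_eq_zero fun v _ => by rw [hyzero u hu]; ring)]
        refine Finset.sum_congr rfl fun u _ => ?_
        rw [← Finset.sum_subset (Finset.filter_subset _ univ)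
          (fun v _ hv => by rw [hyzero v hv]; ring)]
      have hsum : ∑ v ∈ supp, y v = ∑ v, y v :=
        Finset.sum_subset (Finset.filter_subset _ univ) (fun v _ hv => hyzero v hv)
      by_cases hk1 : k ≤ 1
      · rw [hrestr]
        have hz : ∀ u ∈ supp, ∀ v ∈ supp, wlstW G u v * y u * y v = 0 := by
          intro u hu v hv
          have huv : u = v := by
            by_contra hne
            exact absurd (Finset.one_lt_card.2 ⟨u, hu, v, hv, hne⟩) (by omega)
          subst huv
          rw [wlstW_diag]; ring
        calc ∑ u ∈ supp, ∑ v ∈ supp, wlstW G u v * y u * y v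
            = 0 := Finset.sum_eq_zero fun u hu => Finset.sum_eq_zero fun v hv => hz u hu v hv
          _ ≤ (∑ v, y v) ^ 2 := sq_nonneg _
      · push_neg at hk1
        have hk2 : 2 ≤ k := hk1
        have hK2 : (2:ℝ) ≤ (k:ℝ) := by exact_mod_cast hk2
        set K : ℝ := (k:ℝ) / ((k:ℝ) - 1) with hKdef
        have hWle : ∀ u ∈ supp, ∀ v ∈ supp, u ≠ v → wlstW G u v ≤ K := by
          intro u hu v hv hne
          have hadj := hclique u hu v hv hne
          have hcle : k ≤ edgeCliqueNum G u v := by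
            refine wlst_clique_le G ?_ hu hv
            intro a ha b hb hab
            exact hclique a (by simpa using ha) b (by simpa using hb) hab
          have hcR : (k:ℝ) ≤ (edgeCliqueNum G u v : ℝ) := by exact_mod_cast hcle
          rw [wlstW, if_pos hadj, hKdef]
          rw [div_le_div_iff₀ (by linarith) (by linarith)]
          nlinarith
        have hbound : ∀ u ∈ supp, ∀ v ∈ supp,
            wlstW G u v * y u * y v
              ≤ K * (y u * y v) - (if v = u then K * (y u * y v) else 0) := by
          intro u hu v hv
          by_cases hvu : v = u
          · subst hvu
            rw [if_pos rfl, wlstW_diag]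
            exact le_of_eq (by ring)
          · rw [if_neg hvu]
            have hW := hWle u hu v hv (fun h => hvu h.symm)
            have hyu : 0 ≤ y u := hy u
            have hyv : 0 ≤ y v := hy v
            calc wlstW G u v * y u * y v = wlstW G u v * (y u * y v) := by ring
              _ ≤ K * (y u * y v) := mul_le_mul_of_nonneg_right hW (mul_nonneg hyu hyv)
              _ = K * (y u * y v) - 0 := by ring
        have hS2 : (∑ v ∈ supp, y v) ^ 2 ≤ (k:ℝ) * ∑ v ∈ supp, y v ^ 2 := by
          have := sq_sum_le_card_mul_sum_sq (s := supp) (f := y)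
          exact_mod_cast this
        rw [hrestr, ← hsum]
        have hKk : K * ((k:ℝ) - 1) = (k:ℝ) := div_mul_cancel₀ _ (by linarith)
        have hK1 : (K - 1) * ((k:ℝ) - 1) = 1 := by linear_combination hKk
        have hKpos : 0 < K - 1 := by nlinarith
        have hKk2 : (K - 1) * (k:ℝ) = K := by linear_combination hKk
        calc ∑ u ∈ supp, ∑ v ∈ supp, wlstW G u v * y u * y v
            ≤ ∑ u ∈ supp, ∑ v ∈ supp,
                (K * (y u * y v) - (if v = u then K * (y u * y v) else 0)) :=
              Finset.sum_le_sum fun u hu => Finset.sum_le_sum fun v hv => hbound u hu v hv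
          _ = K * (∑ v ∈ supp, y v) ^ 2 - K * ∑ v ∈ supp, y v ^ 2 := by
              simp_rw [Finset.sum_sub_distrib]
              congr 1
              · rw [sq, Finset.sum_mul_sum, Finset.mul_sum]
                refine Finset.sum_congr rfl fun u _ => ?_
                rw [Finset.mul_sum]
              · rw [Finset.mul_sum]
                refine Finset.sum_congr rfl fun u hu => ?_
                rw [Finset.sum_ite_eq' supp u (fun v => K * (y u * y v)), if_pos hu]
                ring
          _ ≤ (∑ v ∈ supp, y v) ^ 2 := by
              have hmul := mul_le_mul_of_nonneg_left hS2 hKpos.le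
              nlinarith [hmul, hKk2, Finset.sum_nonneg (fun v (_ : v ∈ supp) => sq_nonneg (y v))]
    · -- not a clique: shift weight and use the induction hypothesis
      push_neg at hclique
      obtain ⟨u₀, hu₀, v₀, hv₀, hne, hnadj⟩ := hclique
      have key : ∀ u v : V, y u ≠ 0 → y v ≠ 0 → u ≠ v → ¬ G.Adj u v →
          (∑ z, wlstW G v z * y z) ≤ (∑ z, wlstW G u z * y z) →
          ∑ a, ∑ b, wlstW G a b * y a * y b ≤ (∑ v, y v) ^ 2 := by
        intro u v hyu hyv huv hadj hS
        set t := y v with ht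
        set d : V → ℝ := fun w => if w = u then (1:ℝ) else if w = v then -1 else 0 with hd
        set y' : V → ℝ := fun w => y w + t * d w with hy'
        have hsumd : ∀ f : V → ℝ, ∑ w, f w * d w = f u - f v := fun f => wlst_sum_mul_d huv f
        have hy'u : y' u = y u + y v := by
          have : d u = 1 := if_pos rfl
          simp [hy', this, ht]
        have hy'v : y' v = 0 := by
          have hdv : d v = -1 := by
            show (if v = u then (1:ℝ) else if v = v then -1 else 0) = -1
            rw [if_neg (fun h : v = u => huv h.symm), if_pos rfl]
          simp [hy', hdv, ht]
        have hy'w : ∀ w, w ≠ u → w ≠ v → y' w = y w := by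
          intro w h1 h2
          have hdw : d w = 0 := by
            show (if w = u then (1:ℝ) else if w = v then -1 else 0) = 0
            rw [if_neg h1, if_neg h2]
          simp [hy', hdw]
        have hy'nonneg : ∀ w, 0 ≤ y' w := by
          intro w
          by_cases h1 : w = u
          · rw [h1, hy'u]; have := hy u; have := hy v; linarith
          · by_cases h2 : w = v
            · rw [h2, hy'v]
            · rw [hy'w w h1 h2]; exact hy w
        have hsupp' : (univ.filter fun w => y' w ≠ 0)
            ⊆ (univ.filter fun w => y w ≠ 0).erase v := by
          intro w hw
          rw [Finset.mem_filter] at hw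
          rw [Finset.mem_erase]
          by_cases h2 : w = v
          · exact absurd (h2 ▸ hw.2) (by rw [hy'v]; simp)
          · refine ⟨h2, ?_⟩
            by_cases h1 : w = u
            · subst h1; simp [hyu]
            · rw [hy'w w h1 h2] at hw; simp [hw.2]
        have hvmem : v ∈ univ.filter fun w => y w ≠ 0 := by
          simp only [Finset.mem_filter, Finset.mem_univ, true_and]; exact hyv
        have hcard' : (univ.filter fun w => y' w ≠ 0).card ≤ n := by
          have h1 := Finset.card_le_card hsupp'
          have h2 := Finset.card_erase_of_mem hvmem
          have h3 := Finset.card_pos.2 ⟨v, hvmem⟩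
          omega
        have hsum' : ∑ w, y' w = ∑ w, y w := by
          simp only [hy']
          rw [Finset.sum_add_distrib, ← Finset.mul_sum]
          have hd0 : ∑ w, d w = 0 := by
            have := hsumd (fun _ => (1:ℝ))
            simpa using this
          rw [hd0]; ring
        -- expansion of the quadratic form
        have e1 : ∑ a, ∑ b, wlstW G a b * y a * d b
            = (∑ z, wlstW G u z * y z) - (∑ z, wlstW G v z * y z) := by
          have inner : ∀ a, ∑ b, wlstW G a b * y a * d b
              = wlstW G a u * y a - wlstW G a v * y a := fun a =>
            hsumd (fun b => wlstW G a b * y a)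
          rw [Finset.sum_congr rfl fun a _ => inner a, Finset.sum_sub_distrib]
          congr 1
          · exact Finset.sum_congr rfl fun a _ => by rw [wlstW_symm G a u]
          · exact Finset.sum_congr rfl fun a _ => by rw [wlstW_symm G a v]
        have e2 : ∑ a, ∑ b, wlstW G a b * d a * y b
            = (∑ z, wlstW G u z * y z) - (∑ z, wlstW G v z * y z) := by
          rw [Finset.sum_comm]
          have inner : ∀ b, ∑ a, wlstW G a b * d a * y b
              = wlstW G u b * y b - wlstW G v b * y b := by
            intro b
            rw [← hsumd (fun a => wlstW G a b * y b)]
            exact Finset.sum_congr rfl fun a _ => by ring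
          rw [Finset.sum_congr rfl fun b _ => inner b, Finset.sum_sub_distrib]
        have e3 : ∑ a, ∑ b, wlstW G a b * d a * d b = 0 := by
          have inner : ∀ a, ∑ b, wlstW G a b * d a * d b
              = wlstW G a u * d a - wlstW G a v * d a := by
            intro a
            rw [← hsumd (fun b => wlstW G a b * d a)]
          rw [Finset.sum_congr rfl fun a _ => inner a, Finset.sum_sub_distrib,
            hsumd (fun a => wlstW G a u), hsumd (fun a => wlstW G a v),
            wlstW_diag, wlstW_diag, wlstW_of_not_adj G hadj,
            wlstW_of_not_adj G (fun h => hadj h.symm)]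
          ring
        have hq : ∑ a, ∑ b, wlstW G a b * y' a * y' b
            = (∑ a, ∑ b, wlstW G a b * y a * y b)
              + 2 * t * ((∑ z, wlstW G u z * y z) - (∑ z, wlstW G v z * y z)) := by
          have hexp : ∀ a b, wlstW G a b * y' a * y' b
              = wlstW G a b * y a * y b + t * (wlstW G a b * y a * d b)
                + t * (wlstW G a b * d a * y b) + t * t * (wlstW G a b * d a * d b) := by
            intro a b; simp only [hy']; ring
          calc ∑ a, ∑ b, wlstW G a b * y' a * y' b
              = ∑ a, ∑ b, (wlstW G a b * y a * y b + t * (wlstW G a b * y a * d b)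
                + t * (wlstW G a b * d a * y b) + t * t * (wlstW G a b * d a * d b)) :=
                Finset.sum_congr rfl fun a _ => Finset.sum_congr rfl fun b _ => hexp a b
            _ = (∑ a, ∑ b, wlstW G a b * y a * y b)
                + t * (∑ a, ∑ b, wlstW G a b * y a * d b)
                + t * (∑ a, ∑ b, wlstW G a b * d a * y b)
                + t * t * (∑ a, ∑ b, wlstW G a b * d a * d b) := by
                simp_rw [Finset.sum_add_distrib, Finset.mul_sum]
            _ = _ := by rw [e1, e2, e3]; ring
        have hmono : ∑ a, ∑ b, wlstW G a b * y a * y b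
            ≤ ∑ a, ∑ b, wlstW G a b * y' a * y' b := by
          rw [hq]
          have h1 : 0 ≤ t := hy v
          nlinarith [hS]
        calc ∑ a, ∑ b, wlstW G a b * y a * y b
            ≤ ∑ a, ∑ b, wlstW G a b * y' a * y' b := hmono
          _ ≤ (∑ w, y' w) ^ 2 := IH y' hy'nonneg hcard'
          _ = (∑ w, y w) ^ 2 := by rw [hsum']
      rcases le_total (∑ z, wlstW G v₀ z * y z) (∑ z, wlstW G u₀ z * y z) with hS | hS
      · exact key u₀ v₀ (by simpa using hu₀) (by simpa using hv₀) hne hnadj hS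
      · exact key v₀ u₀ (by simpa using hv₀) (by simpa using hu₀) hne.symm
          (fun h => hnadj h.symm) hS
lemma wlst_edge_sum (f : V → V → ℝ) (hf : ∀ u v, f u v = f v u) :
    ∑ u, ∑ v, (if G.Adj u v then f u v else 0)
      = 2 * ∑ e ∈ G.edgeFinset, Sym2.lift ⟨f, hf⟩ e := by
  have h1 : ∑ u, ∑ v, (if G.Adj u v then f u v else 0)
      = ∑ p ∈ (univ ×ˢ univ).filter (fun p : V × V => G.Adj p.1 p.2), f p.1 p.2 := by
    rw [← Finset.sum_product', Finset.sum_filter]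
  have h2 : ∑ p ∈ (univ ×ˢ univ).filter (fun p : V × V => G.Adj p.1 p.2), f p.1 p.2
      = ∑ d : G.Dart, f d.fst d.snd := by
    refine (Finset.sum_bij' (fun d _ => (d.fst, d.snd))
      (fun p hp => SimpleGraph.Dart.mk p (mem_filter.1 hp).2) ?_ ?_ ?_ ?_ ?_).symm
    · intro d _; simp [d.adj]
    · intro p hp; simp
    · intro d _; rfl
    · intro p hp; rfl
    · intro d _; rfl
  have h3 : ∑ d : G.Dart, f d.fst d.snd
      = ∑ d : G.Dart, Sym2.lift ⟨f, hf⟩ d.edge := by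
    refine Finset.sum_congr rfl fun d _ => ?_
    cases d with
    | mk p hp => cases p; rfl
  have h4 : ∑ d : G.Dart, Sym2.lift ⟨f, hf⟩ d.edge
      = ∑ e ∈ G.edgeFinset, ∑ d ∈ univ.filter (fun d : G.Dart => d.edge = e),
          Sym2.lift ⟨f, hf⟩ d.edge := by
    exact (Finset.sum_fiberwise_of_maps_to
      (fun d _ => SimpleGraph.mem_edgeFinset.2 d.edge_mem) _).symm
  have h5 : ∀ e ∈ G.edgeFinset,
      ∑ d ∈ univ.filter (fun d : G.Dart => d.edge = e), Sym2.lift ⟨f, hf⟩ d.edge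
        = 2 * Sym2.lift ⟨f, hf⟩ e := by
    intro e he
    rw [Finset.sum_congr rfl (fun d hd => by rw [(mem_filter.1 hd).2]), Finset.sum_const]
    have := G.dart_edge_fiber_card e (SimpleGraph.mem_edgeFinset.1 he)
    rw [show (univ.filter fun d : G.Dart => d.edge = e) = ({d : G.Dart | d.edge = e} : Finset _) from rfl]
    rw [this, nsmul_eq_mul]
    norm_num
  rw [h1] at *
  rw [h2, h3, h4, Finset.sum_congr rfl h5, ← Finset.mul_sum]


end Helpers

open Finset in
/-- Weighted local spectral Turán theorem (Liu–Ning): for a weighted graph with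
nonnegative symmetric weights `μ` (and zero diagonal), the spectral radius of the
weighted adjacency matrix satisfies
`λ₁(G) ≤ √(2 ∑_{e ∈ E} ((c_G(e) - 1)/c_G(e)) μ(e)²)`,
where `c_G(e)` is computed in the support graph. -/
theorem weighted_local_spectral_turan
    {V : Type*} [Fintype V] [DecidableEq V] (μ : V → V → ℝ)
    (hsym : ∀ u v, μ u v = μ v u) (hnonneg : ∀ u v, 0 ≤ μ u v)
    (hdiag : ∀ v, μ v v = 0) :
    lam1 (Matrix.of μ) ≤
      Real.sqrt (2 * ∑ e ∈ (supportGraph μ).edgeFinset,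
        Sym2.lift ⟨fun u v =>
            (((edgeCliqueNum (supportGraph μ) u v : ℝ) - 1) /
              (edgeCliqueNum (supportGraph μ) u v : ℝ)) * μ u v ^ 2,
          fun u v => by dsimp only; rw [edgeCliqueNum_comm, hsym]⟩ e) := by
  classical
  set G := supportGraph μ with hG
  set c : V → V → ℕ := fun u v => edgeCliqueNum G u v with hc
  set f : V → V → ℝ := fun u v => (((c u v : ℝ) - 1) / (c u v : ℝ)) * μ u v ^ 2 with hf
  have hfsymm : ∀ u v, f u v = f v u := by
    intro u v
    simp only [hf, hc]
    rw [edgeCliqueNum_comm, hsym]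
  set T : ℝ := ∑ u, ∑ v, (if G.Adj u v then f u v else 0) with hT
  have hmu0 : ∀ u v : V, ¬ G.Adj u v → μ u v = 0 := by
    intro u v h
    by_cases huv : u = v
    · rw [huv]; exact hdiag v
    · by_contra hm
      exact h (show (supportGraph μ).Adj u v from ⟨huv, Or.inl hm⟩)
  have hc2 : ∀ u v : V, G.Adj u v → (2:ℝ) ≤ (c u v : ℝ) := by
    intro u v h
    exact_mod_cast wlst_two_le G h
  have hT0 : 0 ≤ T := by
    refine Finset.sum_nonneg fun u _ => Finset.sum_nonneg fun v _ => ?_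
    split_ifs with h
    · have := hc2 u v h
      have h1 : (0:ℝ) ≤ ((c u v : ℝ) - 1) / (c u v : ℝ) :=
        div_nonneg (by linarith) (by linarith)
      exact mul_nonneg h1 (sq_nonneg _)
    · exact le_rfl
  have key : ∀ lam ∈ spectrum ℝ (Matrix.of μ), lam ≤ Real.sqrt T := by
    intro lam hlam
    rcases le_or_gt lam 0 with hlam0 | hlam0
    · exact hlam0.trans (Real.sqrt_nonneg T)
    have hlin : lam ∈ spectrum ℝ (Matrix.toLinAlgEquiv' (Matrix.of μ)) := by
      rwa [AlgEquiv.spectrum_eq]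
    have heig : Module.End.HasEigenvalue (Matrix.toLinAlgEquiv' (Matrix.of μ)) lam :=
      Module.End.hasEigenvalue_iff_mem_spectrum.2 hlin
    obtain ⟨x, hx⟩ := heig.exists_hasEigenvector
    have hmv : Matrix.mulVec (Matrix.of μ) x = lam • x := by
      rw [← Matrix.toLinAlgEquiv'_apply]
      exact Module.End.mem_eigenspace_iff.1 hx.1
    set y : V → ℝ := fun w => |x w| with hy
    set N : ℝ := ∑ w, x w ^ 2 with hN
    have hNpos : 0 < N := by
      obtain ⟨w, hw⟩ := Function.ne_iff.1 hx.2
      refine Finset.sum_pos' (fun v _ => sq_nonneg _) ⟨w, Finset.mem_univ w, ?_⟩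
      have : x w ≠ 0 := hw
      positivity
    have hid : lam * N = ∑ u, ∑ v, μ u v * x u * x v := by
      have h1 : ∀ w, ∑ z, μ w z * x z = lam * x w := by
        intro w
        have := congrFun hmv w
        simpa [Matrix.mulVec, dotProduct] using this
      calc lam * N = ∑ w, x w * (lam * x w) := by
            rw [hN, Finset.mul_sum]
            exact Finset.sum_congr rfl fun w _ => by ring
        _ = ∑ w, x w * ∑ z, μ w z * x z :=
            Finset.sum_congr rfl fun w _ => by rw [h1 w]
        _ = ∑ u, ∑ v, μ u v * x u * x v := by
            refine Finset.sum_congr rfl fun u _ => ?_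
            rw [Finset.mul_sum]
            exact Finset.sum_congr rfl fun v _ => by ring
    have hstep1 : lam * N ≤ ∑ u, ∑ v, (if G.Adj u v then μ u v * y u * y v else 0) := by
      rw [hid]
      refine Finset.sum_le_sum fun u _ => Finset.sum_le_sum fun v _ => ?_
      split_ifs with h
      · have h1 : x u * x v ≤ y u * y v := by
          rw [hy]
          calc x u * x v ≤ |x u * x v| := le_abs_self _
            _ = |x u| * |x v| := abs_mul _ _
        calc μ u v * x u * x v = μ u v * (x u * x v) := by ring
          _ ≤ μ u v * (y u * y v) := mul_le_mul_of_nonneg_left h1 (hnonneg u v)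
          _ = μ u v * y u * y v := by ring
      · rw [hmu0 u v h]; ring_nf; exact le_rfl
    set F : V × V → ℝ := fun p =>
      if G.Adj p.1 p.2 then Real.sqrt (((c p.1 p.2 : ℝ) - 1) / (c p.1 p.2 : ℝ)) * μ p.1 p.2
      else 0 with hF
    set Gg : V × V → ℝ := fun p =>
      if G.Adj p.1 p.2 then Real.sqrt ((c p.1 p.2 : ℝ) / ((c p.1 p.2 : ℝ) - 1)) * (y p.1 * y p.2)
      else 0 with hGg
    have hsplit : ∀ p : V × V,
        (if G.Adj p.1 p.2 then μ p.1 p.2 * y p.1 * y p.2 else 0) = F p * Gg p := by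
      intro p
      simp only [hF, hGg]
      split_ifs with h
      · have h2 := hc2 p.1 p.2 h
        have ha : (0:ℝ) ≤ ((c p.1 p.2 : ℝ) - 1) / (c p.1 p.2 : ℝ) :=
          div_nonneg (by linarith) (by linarith)
        have hprod : (((c p.1 p.2 : ℝ) - 1) / (c p.1 p.2 : ℝ))
            * ((c p.1 p.2 : ℝ) / ((c p.1 p.2 : ℝ) - 1)) = 1 := by
          have hne1 : (c p.1 p.2 : ℝ) - 1 ≠ 0 := by linarith
          have hne0 : (c p.1 p.2 : ℝ) ≠ 0 := by linarith
          field_simp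
        have hs : Real.sqrt (((c p.1 p.2 : ℝ) - 1) / (c p.1 p.2 : ℝ))
            * Real.sqrt ((c p.1 p.2 : ℝ) / ((c p.1 p.2 : ℝ) - 1)) = 1 := by
          rw [← Real.sqrt_mul ha, hprod, Real.sqrt_one]
        calc μ p.1 p.2 * y p.1 * y p.2
            = (Real.sqrt (((c p.1 p.2 : ℝ) - 1) / (c p.1 p.2 : ℝ))
              * Real.sqrt ((c p.1 p.2 : ℝ) / ((c p.1 p.2 : ℝ) - 1)))
              * (μ p.1 p.2 * (y p.1 * y p.2)) := by rw [hs]; ring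
          _ = _ := by ring
      · ring
    have hF2 : ∑ p : V × V, F p ^ 2 = T := by
      rw [Fintype.sum_prod_type, hT]
      refine Finset.sum_congr rfl fun a _ => Finset.sum_congr rfl fun b _ => ?_
      simp only [hF, hf]
      split_ifs with h
      · have h2 := hc2 a b h
        have ha : (0:ℝ) ≤ ((c a b : ℝ) - 1) / (c a b : ℝ) :=
          div_nonneg (by linarith) (by linarith)
        rw [mul_pow, Real.sq_sqrt ha]
      · ring
    have hG2 : ∑ p : V × V, Gg p ^ 2 ≤ N ^ 2 := by
      have heq : ∀ p : V × V, Gg p ^ 2 = wlstW G p.1 p.2 * x p.1 ^ 2 * x p.2 ^ 2 := by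
        intro p
        simp only [hGg, wlstW]
        split_ifs with h
        · have h2 := hc2 p.1 p.2 h
          have hb : (0:ℝ) ≤ (c p.1 p.2 : ℝ) / ((c p.1 p.2 : ℝ) - 1) :=
            div_nonneg (by linarith) (by linarith)
          rw [mul_pow, Real.sq_sqrt hb]
          simp only [hy]
          rw [mul_pow, sq_abs, sq_abs]
          ring
        · ring
      rw [Finset.sum_congr rfl fun p _ => heq p]
      have := wlst_ms G (Fintype.card V) (fun w => x w ^ 2) (fun w => sq_nonneg _)
        (le_trans (Finset.card_filter_le _ _) (le_of_eq (Finset.card_univ)))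
      calc ∑ p : V × V, wlstW G p.1 p.2 * x p.1 ^ 2 * x p.2 ^ 2
          = ∑ u, ∑ v, wlstW G u v * x u ^ 2 * x v ^ 2 := Fintype.sum_prod_type _
        _ ≤ (∑ w, x w ^ 2) ^ 2 := this
        _ = N ^ 2 := by rw [hN]
    have hCS : (∑ p : V × V, F p * Gg p) ^ 2 ≤ T * N ^ 2 := by
      calc (∑ p : V × V, F p * Gg p) ^ 2
          ≤ (∑ p : V × V, F p ^ 2) * ∑ p : V × V, Gg p ^ 2 :=
            Finset.sum_mul_sq_le_sq_mul_sq _ _ _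
        _ ≤ T * N ^ 2 := by
            rw [hF2]
            refine mul_le_mul_of_nonneg_left hG2 hT0
    have hsum_eq : ∑ u, ∑ v, (if G.Adj u v then μ u v * y u * y v else 0)
        = ∑ p : V × V, F p * Gg p := by
      rw [Fintype.sum_prod_type]
      exact Finset.sum_congr rfl fun a _ => Finset.sum_congr rfl fun b _ => hsplit (a, b)
    have hmain : lam * N ≤ ∑ p : V × V, F p * Gg p := hsum_eq ▸ hstep1
    have hlamN : 0 < lam * N := mul_pos hlam0 hNpos
    have hsq : (lam * N) ^ 2 ≤ T * N ^ 2 :=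
      le_trans (pow_le_pow_left₀ hlamN.le hmain 2) hCS
    have hlam2 : lam ^ 2 ≤ T := by
      have hN2 : 0 < N ^ 2 := by positivity
      nlinarith
    exact (Real.le_sqrt' hlam0).2 hlam2
  have hfin : lam1 (Matrix.of μ) ≤ Real.sqrt T :=
    Real.sSup_le key (Real.sqrt_nonneg T)
  calc lam1 (Matrix.of μ) ≤ Real.sqrt T := hfin
    _ = _ := congrArg Real.sqrt (wlst_edge_sum G f hfsymm)
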